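/- For every natural number n, the following identity of polynomials over ℝ holds: X^n = 2^{1−n} · ∑_{k=1, k ≡ n (mod 2)}^{n} binom(n, (n−k)/2) · T_k + c_0, where c_0 = 2^{−n} · binom(n, n/2) if n is even and c_0 = 0 if n is odd, and T_k denotes the k-th Chebyshev polynomial of the first kind. -/

import Mathlib

open Polynomial Polynomial.Chebyshev Finset

lemma lemA (n : ℕ) : ((2:ℝ[X]) * X)^n =
    ∑ j ∈ Finset.range (n+1), (n.choose j : ℝ[X]) * T ℝ ((n:ℤ) - 2*j) := by
  induction n with
  | zero => simp [T_zero]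
  | succ n ih =>
    have key : ∀ m : ℤ, (2:ℝ[X]) * X * T ℝ m = T ℝ (m+1) + T ℝ (m-1) := by
      intro m
      have := T_mul_T ℝ m 1
      rw [T_one] at this
      linear_combination this
    set f1 : ℕ → ℝ[X] := fun k => (n.choose k : ℝ[X]) * T ℝ ((n:ℤ) - 2*k + 1) with hf1
    set f2 : ℕ → ℝ[X] := fun k => (n.choose k : ℝ[X]) * T ℝ ((n:ℤ) - 2*k - 1) with hf2
    set g : ℕ → ℝ[X] := fun j => ((n+1).choose j : ℝ[X]) * T ℝ ((n:ℤ)+1 - 2*j) with hg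
    have step1 : ((2:ℝ[X]) * X)^(n+1) = ∑ k ∈ Finset.range (n+1), (f1 k + f2 k) := by
      calc ((2:ℝ[X]) * X)^(n+1) = 2*X * ((2*X)^n) := by ring
        _ = ∑ j ∈ Finset.range (n+1), (f1 j + f2 j) := by
            rw [ih, Finset.mul_sum]
            refine Finset.sum_congr rfl fun j _ => ?_
            simp only [hf1, hf2]
            rw [show (2:ℝ[X]) * X * ((n.choose j : ℝ[X]) * T ℝ ((n:ℤ) - 2*j))
                = (n.choose j : ℝ[X]) * (2 * X * T ℝ ((n:ℤ) - 2*j)) by ring, key]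
            ring
    rw [step1, Finset.sum_add_distrib]
    have e1 : ∑ j ∈ Finset.range (n+2), g j = ∑ k ∈ Finset.range (n+1), g (k+1) + g 0 :=
      Finset.sum_range_succ' g (n+1)
    have e2 : ∀ k ∈ Finset.range (n+1), g (k+1) = f2 k + f1 (k+1) := by
      intro k _
      simp only [hf1, hf2, hg, Nat.choose_succ_succ]
      push_cast
      have h1 : ((n:ℤ)+1 - 2*((k:ℤ)+1)) = (n:ℤ) - 2*k - 1 := by ring
      have h2 : ((n:ℤ) - 2*((k:ℤ)+1) + 1) = (n:ℤ) - 2*k - 1 := by ring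
      rw [h1, h2]
      ring
    have e3 : ∑ k ∈ Finset.range (n+1), f1 (k+1) = ∑ k ∈ Finset.range n, f1 (k+1) := by
      rw [Finset.sum_range_succ]
      simp [hf1, Nat.choose_succ_self]
    have e4 : ∑ k ∈ Finset.range (n+1), f1 k = ∑ k ∈ Finset.range n, f1 (k+1) + f1 0 :=
      Finset.sum_range_succ' f1 n
    have e5 : g 0 = f1 0 := by
      simp only [hf1, hg]
      norm_num
    show _ = ∑ j ∈ Finset.range (n+2), g j
    rw [e1, Finset.sum_congr rfl e2, Finset.sum_add_distrib, e3, e5, e4]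
    abel

lemma lemB (n : ℕ) : ∑ j ∈ Finset.range (n+1), (n.choose j : ℝ[X]) * T ℝ ((n:ℤ) - 2*j)
    = 2 * (∑ k ∈ (Finset.range (n + 1)).filter (fun k => 1 ≤ k ∧ k % 2 = n % 2),
        (n.choose ((n - k) / 2) : ℝ[X]) * T ℝ (k : ℤ))
      + (if n % 2 = 0 then (n.choose (n / 2) : ℝ[X]) else 0) := by
  set F := (Finset.range (n + 1)).filter (fun k => 1 ≤ k ∧ k % 2 = n % 2) with hF
  set h : ℕ → ℝ[X] := fun j => (n.choose j : ℝ[X]) * T ℝ ((n:ℤ) - 2*j) with hh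
  set gg : ℕ → ℝ[X] := fun k => (n.choose ((n - k) / 2) : ℝ[X]) * T ℝ (k : ℤ) with hgg
  have hset1 : ((Finset.range (n+1)).filter (fun j => ¬ 2*j < n)).filter (fun j => n < 2*j)
      = (Finset.range (n+1)).filter (fun j => n < 2*j) := by
    rw [Finset.filter_filter]
    apply Finset.filter_congr
    intro j _; simp; omega
  have hset2 : ((Finset.range (n+1)).filter (fun j => ¬ 2*j < n)).filter (fun j => ¬ n < 2*j)
      = (Finset.range (n+1)).filter (fun j => 2*j = n) := by
    rw [Finset.filter_filter]
    apply Finset.filter_congr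
    intro j _; simp; omega
  have split1 : ∑ j ∈ Finset.range (n+1), h j
      = ∑ j ∈ (Finset.range (n+1)).filter (fun j => 2*j < n), h j
        + (∑ j ∈ (Finset.range (n+1)).filter (fun j => n < 2*j), h j
        + ∑ j ∈ (Finset.range (n+1)).filter (fun j => 2*j = n), h j) := by
    rw [← hset1, ← hset2, Finset.sum_filter_add_sum_filter_not,
      Finset.sum_filter_add_sum_filter_not]
  have b1 : ∑ j ∈ (Finset.range (n+1)).filter (fun j => 2*j < n), h j = ∑ k ∈ F, gg k := by
    apply Finset.sum_nbij' (fun j => n - 2*j) (fun k => (n - k)/2)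
    · intro j hj
      simp only [hF, Finset.mem_filter, Finset.mem_range] at hj ⊢
      omega
    · intro k hk
      simp only [hF, Finset.mem_filter, Finset.mem_range] at hk ⊢
      omega
    · intro j hj
      simp only [Finset.mem_filter, Finset.mem_range] at hj
      omega
    · intro k hk
      simp only [hF, Finset.mem_filter, Finset.mem_range] at hk
      omega
    · intro j hj
      simp only [Finset.mem_filter, Finset.mem_range] at hj
      simp only [hh, hgg]
      have h1 : (n - (n - 2*j))/2 = j := by omega
      have h2 : ((n - 2*j : ℕ) : ℤ) = (n:ℤ) - 2*j := by omega
      rw [h1, h2]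
  have b2 : ∑ j ∈ (Finset.range (n+1)).filter (fun j => n < 2*j), h j = ∑ k ∈ F, gg k := by
    apply Finset.sum_nbij' (fun j => 2*j - n) (fun k => (n + k)/2)
    · intro j hj
      simp only [hF, Finset.mem_filter, Finset.mem_range] at hj ⊢
      omega
    · intro k hk
      simp only [hF, Finset.mem_filter, Finset.mem_range] at hk ⊢
      omega
    · intro j hj
      simp only [Finset.mem_filter, Finset.mem_range] at hj
      omega
    · intro k hk
      simp only [hF, Finset.mem_filter, Finset.mem_range] at hk
      omega
    · intro j hj
      simp only [Finset.mem_filter, Finset.mem_range] at hj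
      simp only [hh, hgg]
      have h1 : (n - (2*j - n))/2 = n - j := by omega
      have h2 : ((2*j - n : ℕ) : ℤ) = -((n:ℤ) - 2*j) := by omega
      rw [h1, h2, T_neg, Nat.choose_symm (by omega : j ≤ n)]
  have b0 : ∑ j ∈ (Finset.range (n+1)).filter (fun j => 2*j = n), h j
      = (if n % 2 = 0 then (n.choose (n / 2) : ℝ[X]) else 0) := by
    by_cases hp : n % 2 = 0
    · have : (Finset.range (n+1)).filter (fun j => 2*j = n) = {n/2} := by
        ext j; simp; omega
      rw [this, Finset.sum_singleton, if_pos hp]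
      simp only [hh]
      have : (n:ℤ) - 2*(n/2 : ℕ) = 0 := by omega
      rw [this, T_zero, mul_one]
    · have : (Finset.range (n+1)).filter (fun j => 2*j = n) = ∅ := by
        ext j; simp; omega
      rw [this, Finset.sum_empty, if_neg hp]
  rw [split1, b1, b2, b0]
  ring

theorem monomial_eq_chebyshev_sum (n : ℕ) :
    (Polynomial.X : Polynomial ℝ) ^ n =
      ((2 : ℝ) ^ ((1 : ℤ) - (n : ℤ))) •
          (∑ k ∈ (Finset.range (n + 1)).filter (fun k => 1 ≤ k ∧ k % 2 = n % 2),
            ((n.choose ((n - k) / 2) : ℝ)) • Polynomial.Chebyshev.T ℝ (k : ℤ)) +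
        (if n % 2 = 0 then
            ((2 : ℝ) ^ (-(n : ℤ)) * (n.choose (n / 2) : ℝ)) • (1 : Polynomial ℝ)
          else 0) := by
  have h2 : ((2:ℝ[X]))^n ≠ 0 := pow_ne_zero _ two_ne_zero
  apply mul_left_cancel₀ h2
  have hL : (2:ℝ[X])^n * X^n = (2*X)^n := by ring
  rw [hL, lemA n, lemB n]
  have h2C : (2:ℝ[X])^n = C ((2:ℝ)^n) := by
    rw [map_pow, show ((2:ℝ[X])) = C (2:ℝ) by rw [show (2:ℝ) = ((2:ℕ):ℝ) by norm_num, C_eq_natCast]; norm_num]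
  simp only [Polynomial.smul_eq_C_mul, Finset.mul_sum, smul_sum, h2C, mul_add, mul_ite, mul_zero]
  have e1 : (2:ℝ)^n * (2:ℝ)^((1:ℤ) - n) = 2 := by
    rw [← zpow_natCast (2:ℝ) n, ← zpow_add₀ (two_ne_zero)]
    norm_num
  have e2 : (2:ℝ)^n * ((2:ℝ)^(-(n:ℤ)) * (n.choose (n/2) : ℝ)) = (n.choose (n/2) : ℝ) := by
    rw [← mul_assoc, ← zpow_natCast (2:ℝ) n, ← zpow_add₀ (two_ne_zero)]
    norm_num
  congr 1
  · refine Finset.sum_congr rfl fun k _ => ?_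
    rw [← mul_assoc (C ((2:ℝ)^n)), ← map_mul, e1, C_eq_natCast,
      show C (2:ℝ) = ((2:ℕ):ℝ[X]) by rw [show (2:ℝ) = ((2:ℕ):ℝ) by norm_num, C_eq_natCast]]
    push_cast
    ring
  · split_ifs with hp
    · rw [mul_one, ← map_mul, e2, C_eq_natCast]
    · rfl
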